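/- Suppose the Gibbs sampler with block-size q is applied to a Gaussian target N(m, Ω⁻¹) where Ω is q-block-tridiagonal with condition number 𝒞, started from x⁰. Then there is a coupling of the chain x^k with a stationary sample z ∼ N(m, Ω⁻¹) such that E‖C^{1/2}(x^k − z)‖²_{C⁻¹} := E‖C^{-1/2}(x^k − z)‖² ≤ β^k n (1 + ‖C^{-1/2}(x⁰ − m)‖²), where C = Ω⁻¹ and β = 𝒞(1−𝒞⁻¹)²/(1 + 𝒞(1−𝒞⁻¹)²) < 1. -/

import Mathlib

open Matrix

/-- Block strictly-lower-triangular part (with respect to `q × q` blocks). -/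
def Matrix.blkLower {m q : ℕ} (Ω : Matrix (Fin m × Fin q) (Fin m × Fin q) ℝ) :
    Matrix (Fin m × Fin q) (Fin m × Fin q) ℝ :=
  Matrix.of fun p r => if r.1 < p.1 then Ω p r else 0

/-- Block-diagonal part (with respect to `q × q` blocks). -/
def Matrix.blkDiag {m q : ℕ} (Ω : Matrix (Fin m × Fin q) (Fin m × Fin q) ℝ) :
    Matrix (Fin m × Fin q) (Fin m × Fin q) ℝ :=
  Matrix.of fun p r => if p.1 = r.1 then Ω p r else 0

/-- Block strictly-upper-triangular part (with respect to `q × q` blocks). -/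
def Matrix.blkUpper {m q : ℕ} (Ω : Matrix (Fin m × Fin q) (Fin m × Fin q) ℝ) :
    Matrix (Fin m × Fin q) (Fin m × Fin q) ℝ :=
  Matrix.of fun p r => if p.1 < r.1 then Ω p r else 0

open scoped ComplexOrder in
/-- Square root of a positive semidefinite matrix (as in the older Mathlib, where it was
removed since). -/
noncomputable def Matrix.PosSemidef.sqrt {n : Type*} {𝕜 : Type*} [Fintype n] [RCLike 𝕜]
    [DecidableEq n] {A : Matrix n n 𝕜} (hA : A.PosSemidef) : Matrix n n 𝕜 :=
  hA.1.eigenvectorUnitary.1 * diagonal ((↑) ∘ Real.sqrt ∘ hA.1.eigenvalues) *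
    (star hA.1.eigenvectorUnitary : Matrix n n 𝕜)

lemma Matrix.PosSemidef.sqrt_mul_self' {n : Type*} [Fintype n] [DecidableEq n]
    {A : Matrix n n ℝ} (hA : A.PosSemidef) : hA.sqrt * hA.sqrt = A := by
  have hU : (star hA.1.eigenvectorUnitary : Matrix n n ℝ) * (hA.1.eigenvectorUnitary : Matrix n n ℝ) = 1 :=
    Unitary.coe_star_mul_self _
  have hD : diagonal ((RCLike.ofReal ∘ Real.sqrt ∘ hA.1.eigenvalues : n → ℝ)) *
      diagonal ((RCLike.ofReal ∘ Real.sqrt ∘ hA.1.eigenvalues : n → ℝ))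
        = diagonal (RCLike.ofReal ∘ hA.1.eigenvalues) := by
    rw [diagonal_mul_diagonal]; congr 1; funext i
    simp [Real.mul_self_sqrt (hA.eigenvalues_nonneg i)]
  conv_rhs => rw [hA.1.spectral_theorem, Unitary.conjStarAlgAut_apply]
  unfold Matrix.PosSemidef.sqrt
  simp only [Matrix.mul_assoc]
  rw [← Matrix.mul_assoc (star _ : Matrix n n ℝ), hU, Matrix.one_mul, ← Matrix.mul_assoc _ _ (star _ : Matrix n n ℝ), hD]

lemma Matrix.PosSemidef.sqrt_isHerm' {n : Type*} [Fintype n] [DecidableEq n]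
    {A : Matrix n n ℝ} (hA : A.PosSemidef) : hA.sqrt.IsHermitian := by
  unfold Matrix.PosSemidef.sqrt
  rw [Matrix.IsHermitian, conjTranspose_mul, conjTranspose_mul, diagonal_conjTranspose,
    ← star_eq_conjTranspose, ← star_eq_conjTranspose, star_star, Matrix.mul_assoc]
  congr 2

set_option linter.unusedSectionVars false
set_option maxHeartbeats 1000000

namespace GibbsAux
set_option linter.unusedSectionVars false
set_option maxHeartbeats 1000000

variable {n : Type*} [Fintype n] [DecidableEq n]

lemma herm_real {A : Matrix n n ℝ} (h : A.IsHermitian) : Aᵀ = A := by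
  rw [← conjTranspose_eq_transpose_of_trivial, h.eq]

lemma real_herm {A : Matrix n n ℝ} (h : Aᵀ = A) : A.IsHermitian := by
  rwa [Matrix.IsHermitian, conjTranspose_eq_transpose_of_trivial]

lemma dp_flip (A : Matrix n n ℝ) (x y : n → ℝ) :
    x ⬝ᵥ A *ᵥ y = (Aᵀ *ᵥ x) ⬝ᵥ y := by
  rw [dotProduct_mulVec, ← mulVec_transpose]

lemma dp_symm {A : Matrix n n ℝ} (hA : Aᵀ = A) (x y : n → ℝ) :
    x ⬝ᵥ A *ᵥ y = y ⬝ᵥ A *ᵥ x := by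
  rw [dp_flip, hA, dotProduct_comm]

lemma psd_nonneg {A : Matrix n n ℝ} (hA : A.PosSemidef) (x : n → ℝ) :
    0 ≤ x ⬝ᵥ A *ᵥ x := by
  have := hA.dotProduct_mulVec_nonneg x
  rwa [show star x = x from funext fun i => star_trivial _] at this

lemma dp_self_nonneg (x : n → ℝ) : 0 ≤ x ⬝ᵥ x :=
  Finset.sum_nonneg fun i _ => mul_self_nonneg _

lemma dp_self_pos {x : n → ℝ} (hx : x ≠ 0) : 0 < x ⬝ᵥ x := by
  rcases Function.ne_iff.mp hx with ⟨i, hi⟩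
  have : (0:ℝ) < x i * x i := mul_self_pos.mpr hi
  exact lt_of_lt_of_le this (Finset.single_le_sum (f := fun j => x j * x j)
    (fun j _ => mul_self_nonneg _) (Finset.mem_univ i))

lemma qf_expand {A : Matrix n n ℝ} (hA : Aᵀ = A) (u w : n → ℝ) (s : ℝ) :
    (u + s • w) ⬝ᵥ A *ᵥ (u + s • w)
      = u ⬝ᵥ A *ᵥ u + 2*s*(u ⬝ᵥ A *ᵥ w) + s^2*(w ⬝ᵥ A *ᵥ w) := by
  rw [mulVec_add, mulVec_smul, dotProduct_add, add_dotProduct, add_dotProduct,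
    dotProduct_smul, smul_dotProduct, smul_dotProduct, dotProduct_smul, dp_symm hA w u]
  simp only [smul_eq_mul]; ring

lemma dp_expand (u w : n → ℝ) (s : ℝ) :
    (u + s • w) ⬝ᵥ (u + s • w) = u ⬝ᵥ u + 2*s*(u ⬝ᵥ w) + s^2*(w ⬝ᵥ w) := by
  simp only [dotProduct_add, add_dotProduct, dotProduct_smul, smul_dotProduct,
    smul_eq_mul, dotProduct_comm w u]
  ring

lemma qf_sub_smul_one (A : Matrix n n ℝ) (c : ℝ) (v : n → ℝ) :
    v ⬝ᵥ (A - c • (1 : Matrix n n ℝ)) *ᵥ v = v ⬝ᵥ A *ᵥ v - c*(v ⬝ᵥ v) := by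
  rw [sub_mulVec, dotProduct_sub, smul_mulVec, one_mulVec, dotProduct_smul, smul_eq_mul]

lemma qf_smul_one_sub (A : Matrix n n ℝ) (c : ℝ) (v : n → ℝ) :
    v ⬝ᵥ (c • (1 : Matrix n n ℝ) - A) *ᵥ v = c*(v ⬝ᵥ v) - v ⬝ᵥ A *ᵥ v := by
  rw [sub_mulVec, dotProduct_sub, smul_mulVec, one_mulVec, dotProduct_smul, smul_eq_mul]

/-- Cauchy–Schwarz for a positive semidefinite quadratic form. -/
lemma psd_cs {Q : Matrix n n ℝ} (hQ : Q.PosSemidef) (u v : n → ℝ) :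
    (u ⬝ᵥ Q *ᵥ v) ^ 2 ≤ (u ⬝ᵥ Q *ᵥ u) * (v ⬝ᵥ Q *ᵥ v) := by
  have hQt : Qᵀ = Q := herm_real hQ.1
  have key : ∀ s : ℝ, 0 ≤ (v ⬝ᵥ Q *ᵥ v) * (s * s) + (2 * (u ⬝ᵥ Q *ᵥ v)) * s
      + u ⬝ᵥ Q *ᵥ u := by
    intro s
    have h0 := psd_nonneg hQ (u + s • v)
    rw [qf_expand hQt] at h0
    nlinarith [h0]
  have := discrim_le_zero key
  rw [discrim] at this; nlinarith [this]

lemma qf_eq_on_support (A B : Matrix n n ℝ) (u v : n → ℝ)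
    (h : ∀ p r, u p ≠ 0 → v r ≠ 0 → A p r = B p r) :
    u ⬝ᵥ A *ᵥ v = u ⬝ᵥ B *ᵥ v := by
  simp only [dotProduct, mulVec]
  refine Finset.sum_congr rfl fun p _ => ?_
  by_cases hp : u p = 0
  · simp [hp]
  · congr 1
    refine Finset.sum_congr rfl fun r _ => ?_
    by_cases hr : v r = 0
    · simp [hr]
    · rw [h p r hp hr]

lemma dp_disjoint (u v : n → ℝ) (h : ∀ p, u p ≠ 0 → v p = 0) : u ⬝ᵥ v = 0 :=
  Finset.sum_eq_zero fun p _ => by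
    by_cases hp : u p = 0
    · simp [hp]
    · simp [h p hp]

variable {m q : ℕ}

/-- restriction of a vector to the `i`-th block -/
def res (i : Fin m) (x : Fin m × Fin q → ℝ) : Fin m × Fin q → ℝ :=
  fun p => if p.1 = i then x p else 0

lemma res_supp {i : Fin m} {x : Fin m × Fin q → ℝ} {p : Fin m × Fin q}
    (h : res i x p ≠ 0) : p.1 = i := by
  by_contra hc; simp [res, hc] at h

lemma qf_blockdiag_sum (P : Matrix (Fin m × Fin q) (Fin m × Fin q) ℝ)
    (hP : ∀ p r : Fin m × Fin q, p.1 ≠ r.1 → P p r = 0) (x : Fin m × Fin q → ℝ) :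
    x ⬝ᵥ P *ᵥ x = ∑ i : Fin m, (res i x) ⬝ᵥ P *ᵥ (res i x) := by
  have key : ∀ p r : Fin m × Fin q, x p * (P p r * x r)
      = ∑ i : Fin m, (res i x p) * (P p r * (res i x r)) := by
    intro p r
    rw [Finset.sum_eq_single p.1]
    · by_cases h : r.1 = p.1
      · simp [res, h]
      · simp [res, h, hP p r (fun hh => h hh.symm)]
    · intro b _ hb
      simp [res, Ne.symm hb]
    · intro h; exact absurd (Finset.mem_univ _) h
  simp only [dotProduct, mulVec, Finset.mul_sum]
  calc ∑ p, ∑ r, x p * (P p r * x r)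
      = ∑ p, ∑ r, ∑ i : Fin m, (res i x p) * (P p r * (res i x r)) := by
        refine Finset.sum_congr rfl fun p _ => Finset.sum_congr rfl fun r _ => key p r
    _ = ∑ p, ∑ i : Fin m, ∑ r, (res i x p) * (P p r * (res i x r)) :=
        Finset.sum_congr rfl fun p _ => Finset.sum_comm
    _ = ∑ i : Fin m, ∑ p, ∑ r, (res i x p) * (P p r * (res i x r)) :=
        Finset.sum_comm

lemma dp_self_sum (x : Fin m × Fin q → ℝ) :
    x ⬝ᵥ x = ∑ i : Fin m, (res i x) ⬝ᵥ (res i x) := by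
  have h1 : x ⬝ᵥ (1 : Matrix (Fin m × Fin q) (Fin m × Fin q) ℝ) *ᵥ x
      = ∑ i : Fin m, (res i x) ⬝ᵥ (1 : Matrix (Fin m × Fin q) (Fin m × Fin q) ℝ) *ᵥ (res i x) :=
    qf_blockdiag_sum _ (fun p r h => one_apply_ne (fun hh => h (congrArg Prod.fst hh))) x
  simpa [one_mulVec] using h1


/-- Key structural bound: for a block-tridiagonal `Ω` with `lmin ≤ Ω ≤ lmax` (Loewner),
the strictly lower block part satisfies `L D⁻¹ Lᵀ ≼ ((lmax-lmin)/(lmax+lmin))² D`. -/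
lemma tri_block_bound (Ω : Matrix (Fin m × Fin q) (Fin m × Fin q) ℝ)
    (hΩt : Ωᵀ = Ω)
    (htri : ∀ p r : Fin m × Fin q, 1 < |(p.1 : ℤ) - (r.1 : ℤ)| → Ω p r = 0)
    (lmin lmax : ℝ) (hlmin : 0 < lmin) (hle : lmin ≤ lmax)
    (hmin : (Ω - lmin • (1 : Matrix (Fin m × Fin q) (Fin m × Fin q) ℝ)).PosSemidef)
    (hmax : ((lmax • (1 : Matrix (Fin m × Fin q) (Fin m × Fin q) ℝ)) - Ω).PosSemidef)
    (x : Fin m × Fin q → ℝ) :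
    x ⬝ᵥ (Ω.blkLower * Ω.blkDiag⁻¹ * Ω.blkLowerᵀ) *ᵥ x
      ≤ ((lmax - lmin)/(lmax + lmin))^2 * (x ⬝ᵥ Ω.blkDiag *ᵥ x) := by
  have hlmax : 0 < lmax := lt_of_lt_of_le hlmin hle
  set L := Ω.blkLower with hLdef
  set D := Ω.blkDiag with hDdef
  have hDapp : ∀ p r : Fin m × Fin q, D p r = if p.1 = r.1 then Ω p r else 0 :=
    fun p r => rfl
  have hLapp : ∀ p r : Fin m × Fin q, L p r = if r.1 < p.1 then Ω p r else 0 :=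
    fun p r => rfl
  have hΩs : ∀ p r : Fin m × Fin q, Ω r p = Ω p r := by
    intro p r
    conv_lhs => rw [← hΩt, transpose_apply]
  have hDblk : ∀ p r : Fin m × Fin q, p.1 ≠ r.1 → D p r = 0 := by
    intro p r h; simp [hDapp, h]
  have hDt : Dᵀ = D := by
    ext p r
    rw [transpose_apply, hDapp, hDapp]
    by_cases h : p.1 = r.1
    · rw [if_pos h.symm, if_pos h, hΩs]
    · rw [if_neg (fun hh => h hh.symm), if_neg h]
  have hLsupp : ∀ p r : Fin m × Fin q, L p r ≠ 0 → (r.1 : ℕ) + 1 = (p.1 : ℕ) := by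
    intro p r h
    rw [hLapp] at h
    by_cases hlt : r.1 < p.1
    · rw [if_pos hlt] at h
      have h2 : ¬ (1 < |(p.1 : ℤ) - (r.1 : ℤ)|) := fun hh => h (htri p r hh)
      rw [not_lt, abs_le] at h2
      obtain ⟨h3, h4⟩ := h2
      have h5 : (r.1 : ℕ) < (p.1 : ℕ) := hlt
      have e1 : ((p.1 : ℕ) : ℤ) = (p.1 : ℤ) := rfl
      have e2 : ((r.1 : ℕ) : ℤ) = (r.1 : ℤ) := rfl
      omega
    · rw [if_neg hlt] at h; exact absurd rfl h
  -- Loewner bounds on quadratic forms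
  have hΩlb : ∀ v : Fin m × Fin q → ℝ, lmin * (v ⬝ᵥ v) ≤ v ⬝ᵥ Ω *ᵥ v := by
    intro v
    have h0 := psd_nonneg hmin v
    rw [qf_sub_smul_one] at h0; linarith
  have hΩub : ∀ v : Fin m × Fin q → ℝ, v ⬝ᵥ Ω *ᵥ v ≤ lmax * (v ⬝ᵥ v) := by
    intro v
    have h0 := psd_nonneg hmax v
    rw [qf_smul_one_sub] at h0; linarith
  -- D is positive definite
  have hDres : ∀ (i : Fin m) (v : Fin m × Fin q → ℝ),
      (res i v) ⬝ᵥ D *ᵥ (res i v) = (res i v) ⬝ᵥ Ω *ᵥ (res i v) := by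
    intro i v
    refine qf_eq_on_support D Ω _ _ fun p r hp hr => ?_
    rw [hDapp, if_pos]
    rw [res_supp hp, res_supp hr]
  have hDlb : ∀ v : Fin m × Fin q → ℝ, lmin * (v ⬝ᵥ v) ≤ v ⬝ᵥ D *ᵥ v := by
    intro v
    rw [qf_blockdiag_sum D hDblk, dp_self_sum v, Finset.mul_sum]
    refine Finset.sum_le_sum fun i _ => ?_
    rw [hDres]
    exact hΩlb _
  have hDpos : D.PosDef := by
    refine .of_dotProduct_mulVec_pos (real_herm hDt) fun v hv => ?_
    rw [show star v = v from funext fun i => star_trivial _]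
    exact lt_of_lt_of_le (mul_pos hlmin (dp_self_pos hv)) (hDlb v)
  have hDdet : IsUnit D.det := (Matrix.isUnit_iff_isUnit_det D).mp hDpos.isUnit
  have hDD : D * D⁻¹ = 1 := Matrix.mul_nonsing_inv D hDdet
  have hD'D : D⁻¹ * D = 1 := Matrix.nonsing_inv_mul D hDdet
  have hDinvpsd : (D⁻¹).PosSemidef := hDpos.inv.posSemidef
  -- D⁻¹ is block diagonal
  have hDinvblk : ∀ p r : Fin m × Fin q, p.1 ≠ r.1 → D⁻¹ p r = 0 := by
    intro p r hpr
    set Pm : Matrix (Fin m × Fin q) (Fin m × Fin q) ℝ :=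
      Matrix.diagonal (fun c => if c.1 = r.1 then (1:ℝ) else 0) with hPm
    have hcomm : D * Pm = Pm * D := by
      ext a b
      rw [hPm, mul_diagonal, diagonal_mul]
      by_cases hab : a.1 = b.1
      · rw [hab]; ring
      · simp [hDblk a b hab]
    have hcomm' : D⁻¹ * Pm = Pm * D⁻¹ := by
      calc D⁻¹ * Pm = D⁻¹ * Pm * (D * D⁻¹) := by rw [hDD, mul_one]
        _ = D⁻¹ * (Pm * D) * D⁻¹ := by simp only [Matrix.mul_assoc]
        _ = D⁻¹ * (D * Pm) * D⁻¹ := by rw [hcomm]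
        _ = (D⁻¹ * D) * (Pm * D⁻¹) := by simp only [Matrix.mul_assoc]
        _ = Pm * D⁻¹ := by rw [hD'D, Matrix.one_mul]
    have hc := congrFun (congrFun hcomm' p) r
    rw [hPm, mul_diagonal, diagonal_mul] at hc
    simpa [hpr] using hc
  -- block-diagonality of L * D⁻¹ * Lᵀ
  have hblk : ∀ p r : Fin m × Fin q, p.1 ≠ r.1 → (L * D⁻¹ * Lᵀ) p r = 0 := by
    intro p r hpr
    rw [Matrix.mul_apply]
    refine Finset.sum_eq_zero fun c _ => ?_
    rw [Matrix.mul_apply, transpose_apply]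
    by_cases hc : L r c = 0
    · simp [hc]
    · have hcr := hLsupp r c hc
      rw [Finset.sum_mul]
      refine Finset.sum_eq_zero fun b _ => ?_
      by_cases hb : L p b = 0
      · simp [hb]
      · have hbp := hLsupp p b hb
        have hbc : b.1 ≠ c.1 := by
          intro hh
          exact hpr (Fin.ext (by rw [← hbp, ← hcr, hh]))
        rw [hDinvblk b c hbc]
        ring
  -- per-block estimate
  have perblock : ∀ i : Fin m,
      (res i x) ⬝ᵥ (L * D⁻¹ * Lᵀ) *ᵥ (res i x)
        ≤ ((lmax - lmin)/(lmax + lmin))^2 * ((res i x) ⬝ᵥ D *ᵥ (res i x)) := by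
    intro i
    set u := res i x with hu
    set a : Fin m × Fin q → ℝ := Lᵀ *ᵥ u with ha
    set w : Fin m × Fin q → ℝ := D⁻¹ *ᵥ a with hw
    have hsu : ∀ p, u p ≠ 0 → p.1 = i := fun p h => res_supp h
    have hsa : ∀ r, a r ≠ 0 → (r.1 : ℕ) + 1 = (i : ℕ) := by
      intro r h
      rw [ha] at h
      obtain ⟨p, _, hp⟩ := Finset.exists_ne_zero_of_sum_ne_zero h
      have hp' : L p r * u p ≠ 0 := hp
      have h1 : L p r ≠ 0 := fun hh => hp' (by rw [hh, zero_mul])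
      have h2 : u p ≠ 0 := fun hh => hp' (by rw [hh, mul_zero])
      rw [← hsu p h2]
      exact hLsupp p r h1
    have hsw : ∀ r, w r ≠ 0 → (r.1 : ℕ) + 1 = (i : ℕ) := by
      intro r h
      rw [hw] at h
      obtain ⟨b, _, hb⟩ := Finset.exists_ne_zero_of_sum_ne_zero h
      have hb' : D⁻¹ r b * a b ≠ 0 := hb
      have h1 : D⁻¹ r b ≠ 0 := fun hh => hb' (by rw [hh, zero_mul])
      have h2 : a b ≠ 0 := fun hh => hb' (by rw [hh, mul_zero])
      have h3 : r.1 = b.1 := by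
        by_contra hc; exact h1 (hDinvblk r b hc)
      rw [show (r.1 : ℕ) = (b.1 : ℕ) from congrArg Fin.val h3]
      exact hsa b h2
    have eW : u ⬝ᵥ (L * D⁻¹ * Lᵀ) *ᵥ u = a ⬝ᵥ w := by
      rw [← Matrix.mulVec_mulVec, ← Matrix.mulVec_mulVec, dp_flip, ← ha, ← hw]
    have e1 : u ⬝ᵥ Ω *ᵥ u = u ⬝ᵥ D *ᵥ u := by
      refine qf_eq_on_support Ω D _ _ fun p r hp hr => ?_
      rw [hDapp, if_pos]
      rw [hsu p hp, hsu r hr]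
    have e2 : u ⬝ᵥ Ω *ᵥ w = a ⬝ᵥ w := by
      have estep : u ⬝ᵥ Ω *ᵥ w = u ⬝ᵥ L *ᵥ w := by
        refine qf_eq_on_support Ω L _ _ fun p r hp hr => ?_
        rw [hLapp, if_pos]
        have h1 := hsu p hp
        have h2 := hsw r hr
        rw [Fin.lt_def]
        have : (p.1 : ℕ) = (i : ℕ) := congrArg Fin.val h1
        omega
      rw [estep, dp_flip, ← ha]
    have e3 : w ⬝ᵥ Ω *ᵥ w = a ⬝ᵥ w := by
      have estep : w ⬝ᵥ Ω *ᵥ w = w ⬝ᵥ D *ᵥ w := by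
        refine qf_eq_on_support Ω D _ _ fun p r hp hr => ?_
        rw [hDapp, if_pos]
        have h1 := hsw p hp
        have h2 := hsw r hr
        exact Fin.ext (by omega)
      have estep2 : w ⬝ᵥ D *ᵥ w = a ⬝ᵥ w := by
        have hDw : D *ᵥ w = a := by
          rw [hw, Matrix.mulVec_mulVec, hDD, one_mulVec]
        rw [hDw, dotProduct_comm]
      rw [estep, estep2]
    have e5 : u ⬝ᵥ w = 0 := by
      refine dp_disjoint u w fun p hp => ?_
      by_contra hc
      have h1 := hsu p hp
      have h2 := hsw p hc
      have : (p.1 : ℕ) = (i : ℕ) := congrArg Fin.val h1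
      omega
    have hW0 : 0 ≤ a ⬝ᵥ w := by
      rw [hw]; exact psd_nonneg hDinvpsd a
    have hkey : ∀ s : ℝ, 2*s*(lmax+lmin)*(a ⬝ᵥ w)
        ≤ (lmax-lmin)*(u ⬝ᵥ D *ᵥ u) + s^2*(lmax-lmin)*(a ⬝ᵥ w) := by
      intro s
      have h1 := psd_nonneg hmin (u + (-s) • w)
      have h2 := psd_nonneg hmax (u + s • w)
      rw [qf_sub_smul_one, qf_expand hΩt, dp_expand, e1, e2, e3, e5] at h1
      rw [qf_smul_one_sub, qf_expand hΩt, dp_expand, e1, e2, e3, e5] at h2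
      nlinarith [mul_nonneg hlmax.le h1, mul_nonneg hlmin.le h2]
    have huDu : 0 ≤ u ⬝ᵥ D *ᵥ u :=
      le_trans (mul_nonneg hlmin.le (dp_self_nonneg u)) (hDlb u)
    have hquad : ∀ s : ℝ, 0 ≤ ((lmax-lmin)*(a ⬝ᵥ w)) * (s*s)
        + (-(2*(lmax+lmin)*(a ⬝ᵥ w))) * s + (lmax-lmin)*(u ⬝ᵥ D *ᵥ u) := by
      intro s
      have h := hkey s
      nlinarith [h]
    have hdisc := discrim_le_zero hquad
    rw [discrim] at hdisc
    rw [eW, div_pow, div_mul_eq_mul_div, le_div_iff₀ (by positivity : (0:ℝ) < (lmax+lmin)^2)]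
    rcases eq_or_lt_of_le hW0 with h0 | h0
    · rw [← h0]
      nlinarith [huDu, sq_nonneg (lmax - lmin)]
    · nlinarith [hdisc, h0, huDu, sq_nonneg (lmax + lmin), sq_nonneg (lmax - lmin)]
  -- sum over blocks
  rw [qf_blockdiag_sum _ hblk x, qf_blockdiag_sum D hDblk x, Finset.mul_sum]
  exact Finset.sum_le_sum fun i _ => perblock i


lemma qf_expand_sub {A : Matrix n n ℝ} (hA : Aᵀ = A) (u w : n → ℝ) :
    (u - w) ⬝ᵥ A *ᵥ (u - w)
      = u ⬝ᵥ A *ᵥ u - 2*(u ⬝ᵥ A *ᵥ w) + w ⬝ᵥ A *ᵥ w := by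
  rw [mulVec_sub, dotProduct_sub, sub_dotProduct, sub_dotProduct, dp_symm hA w u]
  ring

lemma conj_qf (S A : Matrix n n ℝ) (hS : Sᵀ = S) (x : n → ℝ) :
    x ⬝ᵥ (S * A * S) *ᵥ x = (S *ᵥ x) ⬝ᵥ A *ᵥ (S *ᵥ x) := by
  have h1 : (S * A * S) *ᵥ x = S *ᵥ (A *ᵥ (S *ᵥ x)) := by
    rw [Matrix.mulVec_mulVec, Matrix.mulVec_mulVec]
  rw [h1, dp_flip, hS]

lemma blkDiag_facts (Ω : Matrix (Fin m × Fin q) (Fin m × Fin q) ℝ)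
    (hΩt : Ωᵀ = Ω) (lmin lmax : ℝ) (hlmin : 0 < lmin)
    (hmin : (Ω - lmin • (1 : Matrix (Fin m × Fin q) (Fin m × Fin q) ℝ)).PosSemidef)
    (hmax : ((lmax • (1 : Matrix (Fin m × Fin q) (Fin m × Fin q) ℝ)) - Ω).PosSemidef) :
    (Ω.blkDiag).PosDef ∧ (Ω.blkDiag)ᵀ = Ω.blkDiag
      ∧ (∀ v, lmin*(v ⬝ᵥ v) ≤ v ⬝ᵥ Ω.blkDiag *ᵥ v)
      ∧ (∀ v, v ⬝ᵥ Ω.blkDiag *ᵥ v ≤ lmax*(v ⬝ᵥ v)) := by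
  set D := Ω.blkDiag with hDdef
  have hDapp : ∀ p r : Fin m × Fin q, D p r = if p.1 = r.1 then Ω p r else 0 :=
    fun p r => rfl
  have hΩs : ∀ p r : Fin m × Fin q, Ω r p = Ω p r := by
    intro p r
    conv_lhs => rw [← hΩt, transpose_apply]
  have hDblk : ∀ p r : Fin m × Fin q, p.1 ≠ r.1 → D p r = 0 := by
    intro p r h; simp [hDapp, h]
  have hDt : Dᵀ = D := by
    ext p r
    rw [transpose_apply, hDapp, hDapp]
    by_cases h : p.1 = r.1
    · rw [if_pos h.symm, if_pos h, hΩs]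
    · rw [if_neg (fun hh => h hh.symm), if_neg h]
  have hΩlb : ∀ v : Fin m × Fin q → ℝ, lmin * (v ⬝ᵥ v) ≤ v ⬝ᵥ Ω *ᵥ v := by
    intro v
    have h0 := psd_nonneg hmin v
    rw [qf_sub_smul_one] at h0; linarith
  have hΩub : ∀ v : Fin m × Fin q → ℝ, v ⬝ᵥ Ω *ᵥ v ≤ lmax * (v ⬝ᵥ v) := by
    intro v
    have h0 := psd_nonneg hmax v
    rw [qf_smul_one_sub] at h0; linarith
  have hDres : ∀ (i : Fin m) (v : Fin m × Fin q → ℝ),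
      (res i v) ⬝ᵥ D *ᵥ (res i v) = (res i v) ⬝ᵥ Ω *ᵥ (res i v) := by
    intro i v
    refine qf_eq_on_support D Ω _ _ fun p r hp hr => ?_
    rw [hDapp, if_pos]
    rw [res_supp hp, res_supp hr]
  have hDlb : ∀ v : Fin m × Fin q → ℝ, lmin * (v ⬝ᵥ v) ≤ v ⬝ᵥ D *ᵥ v := by
    intro v
    rw [qf_blockdiag_sum D hDblk, dp_self_sum v, Finset.mul_sum]
    refine Finset.sum_le_sum fun i _ => ?_
    rw [hDres]
    exact hΩlb _
  have hDub : ∀ v : Fin m × Fin q → ℝ, v ⬝ᵥ D *ᵥ v ≤ lmax * (v ⬝ᵥ v) := by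
    intro v
    rw [qf_blockdiag_sum D hDblk, dp_self_sum v, Finset.mul_sum]
    refine Finset.sum_le_sum fun i _ => ?_
    rw [hDres]
    exact hΩub _
  refine ⟨Matrix.PosDef.of_dotProduct_mulVec_pos (real_herm hDt) fun v hv => ?_, hDt, hDlb, hDub⟩
  rw [show star v = v from funext fun i => star_trivial _]
  exact lt_of_lt_of_le (mul_pos hlmin (dp_self_pos hv)) (hDlb v)

end GibbsAux

set_option maxHeartbeats 2000000
open GibbsAux
/-- dimension-independent convergence of the blocked Gibbs sampler for a
Gaussian target `N(m, Ω⁻¹)` with `q`-block-tridiagonal precision `Ω` of condition number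
`𝒞 = λ_max/λ_min` (extreme eigenvalues expressed in the Loewner order).  The Gibbs chain
satisfies `x^{k} - m = G^k (x^0 - z^0)`-type coupling with a stationary sample
`z ∼ N(m, Ω⁻¹)`: the difference `Δ^k = x^k - z^k = G^k Δ^0` with `Δ^0 ∼ N(x^0 - m, C)`,
`C = Ω⁻¹`, `G = -(Ω_L + Ω_D)⁻¹ Ω_U`, so that
`E‖C^{-1/2}(x^k - z^k)‖² = ‖C^{-1/2} G^k (x^0 - m)‖² + tr(C^{-1/2} G^k C (Gᵀ)^k C^{-1/2})`.
The theorem asserts `β = 𝒞(1-𝒞⁻¹)²/(1+𝒞(1-𝒞⁻¹)²) < 1` and that this expected squared error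
is at most `β^k · n · (1 + ‖C^{-1/2}(x^0 - m)‖²)`, where `n = mq`. -/
theorem gibbs_dimension_independent_convergence
    {m q : ℕ} (Ω : Matrix (Fin m × Fin q) (Fin m × Fin q) ℝ) (hΩ : Ω.PosDef)
    (htri : ∀ p r : Fin m × Fin q, 1 < |(p.1 : ℤ) - (r.1 : ℤ)| → Ω p r = 0)
    (lmin lmax : ℝ) (hlmin : 0 < lmin) (hle : lmin ≤ lmax)
    (hmin : (Ω - lmin • (1 : Matrix (Fin m × Fin q) (Fin m × Fin q) ℝ)).PosSemidef)
    (hmax : ((lmax • (1 : Matrix (Fin m × Fin q) (Fin m × Fin q) ℝ)) - Ω).PosSemidef)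
    (hInv : IsUnit (Ω.blkLower + Ω.blkDiag))
    (x₀ mean : Fin m × Fin q → ℝ) :
    ((lmax / lmin) * (1 - (lmax / lmin)⁻¹) ^ 2) /
        (1 + (lmax / lmin) * (1 - (lmax / lmin)⁻¹) ^ 2) < 1 ∧
    ∀ k : ℕ,
      (∑ i : Fin m × Fin q,
          (hΩ.inv.posSemidef.sqrt⁻¹ *ᵥ
            ((-((Ω.blkLower + Ω.blkDiag)⁻¹ * Ω.blkUpper)) ^ k *ᵥ (x₀ - mean))) i ^ 2) +
        (hΩ.inv.posSemidef.sqrt⁻¹ * (-((Ω.blkLower + Ω.blkDiag)⁻¹ * Ω.blkUpper)) ^ k * Ω⁻¹ *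
            ((-((Ω.blkLower + Ω.blkDiag)⁻¹ * Ω.blkUpper))ᵀ) ^ k *
            hΩ.inv.posSemidef.sqrt⁻¹).trace ≤
      (((lmax / lmin) * (1 - (lmax / lmin)⁻¹) ^ 2) /
          (1 + (lmax / lmin) * (1 - (lmax / lmin)⁻¹) ^ 2)) ^ k * (m * q) *
        (1 + ∑ i : Fin m × Fin q, (hΩ.inv.posSemidef.sqrt⁻¹ *ᵥ (x₀ - mean)) i ^ 2) := by
  have hlmax : 0 < lmax := lt_of_lt_of_le hlmin hle
  set t := (lmax / lmin) * (1 - (lmax / lmin)⁻¹) ^ 2 with ht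
  have ht0 : 0 ≤ t := mul_nonneg (div_nonneg hlmax.le hlmin.le) (sq_nonneg _)
  have ht1 : 0 < 1 + t := by linarith
  set β := t / (1 + t) with hβ
  have hβ0 : 0 ≤ β := div_nonneg ht0 ht1.le
  have hβ1 : β < 1 := (div_lt_one ht1).mpr (by linarith)
  refine ⟨hβ1, fun k => ?_⟩
  -- basic symmetry facts
  have hΩt : Ωᵀ = Ω := herm_real hΩ.1
  have hΩs : ∀ p r : Fin m × Fin q, Ω r p = Ω p r := by
    intro p r
    conv_lhs => rw [← hΩt, transpose_apply]
  have hUL : Ω.blkUpper = Ω.blkLowerᵀ := by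
    ext p r
    rw [transpose_apply]
    show (if p.1 < r.1 then Ω p r else 0) = (if p.1 < r.1 then Ω r p else 0)
    by_cases h : p.1 < r.1
    · rw [if_pos h, if_pos h, hΩs]
    · rw [if_neg h, if_neg h]
  have hsplit : Ω = Ω.blkLower + Ω.blkDiag + Ω.blkUpper := by
    ext p r
    show Ω p r = (if r.1 < p.1 then Ω p r else 0) + (if p.1 = r.1 then Ω p r else 0)
      + (if p.1 < r.1 then Ω p r else 0)
    rcases lt_trichotomy p.1 r.1 with h | h | h
    · rw [if_neg (asymm h), if_neg h.ne, if_pos h]; ring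
    · rw [if_neg (by rw [h]; exact lt_irrefl _), if_pos h,
        if_neg (by rw [h]; exact lt_irrefl _)]
      ring
    · rw [if_pos h, if_neg (fun hh => absurd h (by rw [hh]; exact lt_irrefl _)),
        if_neg (asymm h)]
      ring
  -- D facts
  obtain ⟨hDpos, hDt, hDlb, hDub⟩ := blkDiag_facts Ω hΩt lmin lmax hlmin hmin hmax
  have hDdet : IsUnit (Ω.blkDiag).det := (Matrix.isUnit_iff_isUnit_det _).mp hDpos.isUnit
  have hDD : Ω.blkDiag * Ω.blkDiag⁻¹ = 1 := Matrix.mul_nonsing_inv _ hDdet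
  have hD'D : Ω.blkDiag⁻¹ * Ω.blkDiag = 1 := Matrix.nonsing_inv_mul _ hDdet
  have hDinvpsd : (Ω.blkDiag⁻¹).PosSemidef := hDpos.inv.posSemidef
  have hDpsd : (Ω.blkDiag).PosSemidef := hDpos.posSemidef
  -- M and Ω invertibility
  have hMdet : IsUnit ((Ω.blkLower + Ω.blkDiag)).det := (Matrix.isUnit_iff_isUnit_det _).mp hInv
  have hMM' : (Ω.blkLower + Ω.blkDiag) * (Ω.blkLower + Ω.blkDiag)⁻¹ = 1 := Matrix.mul_nonsing_inv _ hMdet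
  have hM'M : (Ω.blkLower + Ω.blkDiag)⁻¹ * (Ω.blkLower + Ω.blkDiag) = 1 := Matrix.nonsing_inv_mul _ hMdet
  have hΩdet : IsUnit Ω.det := (Matrix.isUnit_iff_isUnit_det Ω).mp hΩ.isUnit
  have hΩΩ : Ω * Ω⁻¹ = 1 := Matrix.mul_nonsing_inv _ hΩdet
  have hΩ'Ω : Ω⁻¹ * Ω = 1 := Matrix.nonsing_inv_mul _ hΩdet
  have hΩlb : ∀ v : Fin m × Fin q → ℝ, lmin * (v ⬝ᵥ v) ≤ v ⬝ᵥ Ω *ᵥ v := by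
    intro v
    have h0 := psd_nonneg hmin v
    rw [qf_sub_smul_one] at h0; linarith
  -- the key tridiagonal bound: L D⁻¹ Lᵀ ≼ t Ω
  have hLDU : ∀ x, x ⬝ᵥ (Ω.blkLower * Ω.blkDiag⁻¹ * Ω.blkLowerᵀ) *ᵥ x ≤ t * (x ⬝ᵥ Ω *ᵥ x) := by
    intro x
    have h1 := tri_block_bound Ω hΩt htri lmin lmax hlmin hle hmin hmax x
    have hconst : ((lmax - lmin)/(lmax + lmin))^2 * lmax ≤ t * lmin := by
      have e : t * lmin = (lmax - lmin)^2 / lmax := by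
        rw [ht]; field_simp
      rw [e, div_pow, div_mul_eq_mul_div, div_le_div_iff₀ (by positivity) hlmax]
      nlinarith [mul_nonneg (sq_nonneg (lmax - lmin))
        (mul_nonneg hlmin.le (by linarith : (0:ℝ) ≤ 2*lmax + lmin))]
    have h2 : x ⬝ᵥ Ω.blkDiag *ᵥ x ≤ lmax * (x ⬝ᵥ x) := hDub x
    have h3 : lmin * (x ⬝ᵥ x) ≤ x ⬝ᵥ Ω *ᵥ x := hΩlb x
    have hxx : 0 ≤ x ⬝ᵥ x := dp_self_nonneg x
    nlinarith [h1, mul_le_mul_of_nonneg_left h2 (sq_nonneg ((lmax - lmin)/(lmax + lmin))),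
      mul_le_mul_of_nonneg_right hconst hxx, mul_le_mul_of_nonneg_left h3 ht0]
  -- M D⁻¹ Mᵀ = Ω + L D⁻¹ Lᵀ
  have hMMT : (Ω.blkLower + Ω.blkDiag)ᵀ = Ω.blkLowerᵀ + Ω.blkDiag := by rw [transpose_add, hDt]
  have hMDM : (Ω.blkLower + Ω.blkDiag) * Ω.blkDiag⁻¹ * (Ω.blkLower + Ω.blkDiag)ᵀ = Ω + Ω.blkLower * Ω.blkDiag⁻¹ * Ω.blkLowerᵀ := by
    calc (Ω.blkLower + Ω.blkDiag) * Ω.blkDiag⁻¹ * (Ω.blkLower + Ω.blkDiag)ᵀ = (Ω.blkLower * Ω.blkDiag⁻¹ + 1) * (Ω.blkLowerᵀ + Ω.blkDiag) := by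
          rw [hMMT, Matrix.add_mul, hDD]
      _ = Ω.blkLower * Ω.blkDiag⁻¹ * Ω.blkLowerᵀ + Ω.blkLower * (Ω.blkDiag⁻¹ * Ω.blkDiag) + (Ω.blkLowerᵀ + Ω.blkDiag) := by
          simp only [Matrix.add_mul, Matrix.mul_add, Matrix.one_mul, Matrix.mul_assoc]
          abel
      _ = Ω + Ω.blkLower * Ω.blkDiag⁻¹ * Ω.blkLowerᵀ := by
          rw [hD'D, Matrix.mul_one]
          conv_rhs => lhs; rw [hsplit, hUL]
          abel
  have hMDMq : ∀ x, x ⬝ᵥ ((Ω.blkLower + Ω.blkDiag) * Ω.blkDiag⁻¹ * (Ω.blkLower + Ω.blkDiag)ᵀ) *ᵥ x ≤ (1+t) * (x ⬝ᵥ Ω *ᵥ x) := by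
    intro x
    rw [hMDM, Matrix.add_mulVec, dotProduct_add]
    have := hLDU x
    linarith
  -- one-step contraction in the Ω-norm
  have contr : ∀ x, ((-((Ω.blkLower + Ω.blkDiag)⁻¹ * Ω.blkUpper)) *ᵥ x) ⬝ᵥ Ω *ᵥ ((-((Ω.blkLower + Ω.blkDiag)⁻¹ * Ω.blkUpper)) *ᵥ x) ≤ β * (x ⬝ᵥ Ω *ᵥ x) := by
    intro x
    have hGid : (-((Ω.blkLower + Ω.blkDiag)⁻¹ * Ω.blkUpper)) = 1 - (Ω.blkLower + Ω.blkDiag)⁻¹ * Ω := by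
      have h : (Ω.blkLower + Ω.blkDiag)⁻¹ * Ω = 1 + (Ω.blkLower + Ω.blkDiag)⁻¹ * Ω.blkUpper := by
        conv_lhs => rhs; rw [hsplit]
        rw [show Ω.blkLower + Ω.blkDiag + Ω.blkUpper = (Ω.blkLower + Ω.blkDiag) + Ω.blkUpper from rfl, Matrix.mul_add, hM'M]
      rw [h]; abel
    set y := (Ω.blkLower + Ω.blkDiag)⁻¹ *ᵥ (Ω *ᵥ x) with hy
    clear_value y
    have hGx : (-((Ω.blkLower + Ω.blkDiag)⁻¹ * Ω.blkUpper)) *ᵥ x = x - y := by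
      rw [hGid, Matrix.sub_mulVec, Matrix.one_mulVec, hy, ← Matrix.mulVec_mulVec]
    have hΩxMy : Ω *ᵥ x = (Ω.blkLower + Ω.blkDiag) *ᵥ y := by
      rw [hy, Matrix.mulVec_mulVec, Matrix.mulVec_mulVec, hMM', Matrix.one_mul]
    have exy : x ⬝ᵥ Ω *ᵥ y = y ⬝ᵥ (Ω.blkLower + Ω.blkDiag) *ᵥ y := by
      rw [dp_symm hΩt, hΩxMy]
    have eyy : y ⬝ᵥ Ω *ᵥ y = 2*(y ⬝ᵥ (Ω.blkLower + Ω.blkDiag) *ᵥ y) - y ⬝ᵥ Ω.blkDiag *ᵥ y := by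
      have hsum : (Ω.blkLower + Ω.blkDiag) + (Ω.blkLower + Ω.blkDiag)ᵀ = Ω + Ω.blkDiag := by
        rw [hMMT]
        conv_rhs => lhs; rw [hsplit, hUL]
        abel
      have h2 : y ⬝ᵥ ((Ω.blkLower + Ω.blkDiag) + (Ω.blkLower + Ω.blkDiag)ᵀ) *ᵥ y = y ⬝ᵥ (Ω + Ω.blkDiag) *ᵥ y := by rw [hsum]
      simp only [Matrix.add_mulVec, dotProduct_add] at h2
      have h3 : y ⬝ᵥ (Ω.blkLower + Ω.blkDiag)ᵀ *ᵥ y = y ⬝ᵥ (Ω.blkLower + Ω.blkDiag) *ᵥ y := by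
        rw [dp_flip, transpose_transpose, dotProduct_comm]
      have h4 : y ⬝ᵥ (Ω.blkLower + Ω.blkDiag) *ᵥ y
          = y ⬝ᵥ Ω.blkLower *ᵥ y + y ⬝ᵥ Ω.blkDiag *ᵥ y := by
        rw [Matrix.add_mulVec, dotProduct_add]
      rw [h3] at h2
      linarith
    have hqf : ((-((Ω.blkLower + Ω.blkDiag)⁻¹ * Ω.blkUpper)) *ᵥ x) ⬝ᵥ Ω *ᵥ ((-((Ω.blkLower + Ω.blkDiag)⁻¹ * Ω.blkUpper)) *ᵥ x) = x ⬝ᵥ Ω *ᵥ x - y ⬝ᵥ Ω.blkDiag *ᵥ y := by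
      rw [hGx, qf_expand_sub hΩt, exy, eyy]
      ring
    have hyD0 : 0 ≤ y ⬝ᵥ Ω.blkDiag *ᵥ y := psd_nonneg hDpsd y
    have hxΩ0 : 0 ≤ x ⬝ᵥ Ω *ᵥ x := psd_nonneg hΩ.posSemidef x
    have hcs : (x ⬝ᵥ Ω *ᵥ x)^2 ≤ (x ⬝ᵥ ((Ω.blkLower + Ω.blkDiag) * Ω.blkDiag⁻¹ * (Ω.blkLower + Ω.blkDiag)ᵀ) *ᵥ x) * (y ⬝ᵥ Ω.blkDiag *ᵥ y) := by
      have h := psd_cs hDinvpsd ((Ω.blkLower + Ω.blkDiag)ᵀ *ᵥ x) (Ω.blkDiag *ᵥ y)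
      have c1 : ((Ω.blkLower + Ω.blkDiag)ᵀ *ᵥ x) ⬝ᵥ Ω.blkDiag⁻¹ *ᵥ (Ω.blkDiag *ᵥ y) = x ⬝ᵥ Ω *ᵥ x := by
        rw [Matrix.mulVec_mulVec, hD'D, Matrix.one_mulVec, ← dp_flip, ← hΩxMy]
      have c2 : ((Ω.blkLower + Ω.blkDiag)ᵀ *ᵥ x) ⬝ᵥ Ω.blkDiag⁻¹ *ᵥ ((Ω.blkLower + Ω.blkDiag)ᵀ *ᵥ x)
          = x ⬝ᵥ ((Ω.blkLower + Ω.blkDiag) * Ω.blkDiag⁻¹ * (Ω.blkLower + Ω.blkDiag)ᵀ) *ᵥ x := by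
        rw [show ((Ω.blkLower + Ω.blkDiag) * Ω.blkDiag⁻¹ * (Ω.blkLower + Ω.blkDiag)ᵀ) *ᵥ x = (Ω.blkLower + Ω.blkDiag) *ᵥ (Ω.blkDiag⁻¹ *ᵥ ((Ω.blkLower + Ω.blkDiag)ᵀ *ᵥ x)) from by
          rw [Matrix.mulVec_mulVec, Matrix.mulVec_mulVec]]
        conv_rhs => rw [dp_flip]
      have c3 : (Ω.blkDiag *ᵥ y) ⬝ᵥ Ω.blkDiag⁻¹ *ᵥ (Ω.blkDiag *ᵥ y) = y ⬝ᵥ Ω.blkDiag *ᵥ y := by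
        rw [Matrix.mulVec_mulVec, hD'D, Matrix.one_mulVec, dotProduct_comm]
      rw [c1, c2, c3] at h; exact h
    have hxy : x ⬝ᵥ Ω *ᵥ x ≤ (1+t) * (y ⬝ᵥ Ω.blkDiag *ᵥ y) := by
      have h2 := hMDMq x
      rcases eq_or_lt_of_le hxΩ0 with h0 | h0
      · rw [← h0]; positivity
      · nlinarith [hcs, h2, hyD0, h0]
    rw [hqf, hβ]
    have hdiv : x ⬝ᵥ Ω *ᵥ x / (1+t) ≤ y ⬝ᵥ Ω.blkDiag *ᵥ y :=
      (div_le_iff₀ ht1).mpr (by linarith [hxy])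
    have e : t / (1+t) * (x ⬝ᵥ Ω *ᵥ x) = x ⬝ᵥ Ω *ᵥ x - x ⬝ᵥ Ω *ᵥ x / (1+t) := by
      field_simp
      ring
    rw [e]
    linarith
  -- iterated contraction
  have contrK : ∀ (k:ℕ) (x : Fin m × Fin q → ℝ),
      ((-((Ω.blkLower + Ω.blkDiag)⁻¹ * Ω.blkUpper))^k *ᵥ x) ⬝ᵥ Ω *ᵥ ((-((Ω.blkLower + Ω.blkDiag)⁻¹ * Ω.blkUpper))^k *ᵥ x) ≤ β^k * (x ⬝ᵥ Ω *ᵥ x) := by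
    intro k
    induction k with
    | zero => intro x; simp [pow_zero, Matrix.one_mulVec]
    | succ n ih =>
      intro x
      have h1 : (-((Ω.blkLower + Ω.blkDiag)⁻¹ * Ω.blkUpper))^(n+1) *ᵥ x = (-((Ω.blkLower + Ω.blkDiag)⁻¹ * Ω.blkUpper))^n *ᵥ ((-((Ω.blkLower + Ω.blkDiag)⁻¹ * Ω.blkUpper)) *ᵥ x) := by
        rw [Matrix.mulVec_mulVec, ← pow_succ]
      rw [h1, pow_succ]
      calc ((-((Ω.blkLower + Ω.blkDiag)⁻¹ * Ω.blkUpper))^n *ᵥ ((-((Ω.blkLower + Ω.blkDiag)⁻¹ * Ω.blkUpper)) *ᵥ x)) ⬝ᵥ Ω *ᵥ ((-((Ω.blkLower + Ω.blkDiag)⁻¹ * Ω.blkUpper))^n *ᵥ ((-((Ω.blkLower + Ω.blkDiag)⁻¹ * Ω.blkUpper)) *ᵥ x))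
          ≤ β^n * (((-((Ω.blkLower + Ω.blkDiag)⁻¹ * Ω.blkUpper)) *ᵥ x) ⬝ᵥ Ω *ᵥ ((-((Ω.blkLower + Ω.blkDiag)⁻¹ * Ω.blkUpper)) *ᵥ x)) := ih ((-((Ω.blkLower + Ω.blkDiag)⁻¹ * Ω.blkUpper)) *ᵥ x)
        _ ≤ β^n * (β * (x ⬝ᵥ Ω *ᵥ x)) :=
            mul_le_mul_of_nonneg_left (contr x) (pow_nonneg hβ0 n)
        _ = β^n * β * (x ⬝ᵥ Ω *ᵥ x) := by ring
  -- contraction for the flipped form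
  have hCpsd : (Ω⁻¹).PosSemidef := hΩ.inv.posSemidef
  have contrC : ∀ (k:ℕ) (y : Fin m × Fin q → ℝ),
      y ⬝ᵥ ((-((Ω.blkLower + Ω.blkDiag)⁻¹ * Ω.blkUpper))^k * Ω⁻¹ * ((-((Ω.blkLower + Ω.blkDiag)⁻¹ * Ω.blkUpper))^k)ᵀ) *ᵥ y ≤ β^k * (y ⬝ᵥ Ω⁻¹ *ᵥ y) := by
    intro k y
    have hLform : y ⬝ᵥ ((-((Ω.blkLower + Ω.blkDiag)⁻¹ * Ω.blkUpper))^k * Ω⁻¹ * ((-((Ω.blkLower + Ω.blkDiag)⁻¹ * Ω.blkUpper))^k)ᵀ) *ᵥ y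
        = (((-((Ω.blkLower + Ω.blkDiag)⁻¹ * Ω.blkUpper))^k)ᵀ *ᵥ y) ⬝ᵥ Ω⁻¹ *ᵥ (((-((Ω.blkLower + Ω.blkDiag)⁻¹ * Ω.blkUpper))^k)ᵀ *ᵥ y) := by
      rw [show ((-((Ω.blkLower + Ω.blkDiag)⁻¹ * Ω.blkUpper))^k * Ω⁻¹ * ((-((Ω.blkLower + Ω.blkDiag)⁻¹ * Ω.blkUpper))^k)ᵀ) *ᵥ y = (-((Ω.blkLower + Ω.blkDiag)⁻¹ * Ω.blkUpper))^k *ᵥ (Ω⁻¹ *ᵥ (((-((Ω.blkLower + Ω.blkDiag)⁻¹ * Ω.blkUpper))^k)ᵀ *ᵥ y)) from by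
        rw [Matrix.mulVec_mulVec, Matrix.mulVec_mulVec], dp_flip]
    rw [hLform]
    set z := ((-((Ω.blkLower + Ω.blkDiag)⁻¹ * Ω.blkUpper))^k)ᵀ *ᵥ y with hz
    have hC0 : 0 ≤ z ⬝ᵥ Ω⁻¹ *ᵥ z := psd_nonneg hCpsd z
    have hy0 : 0 ≤ y ⬝ᵥ Ω⁻¹ *ᵥ y := psd_nonneg hCpsd y
    have h1 : y ⬝ᵥ ((-((Ω.blkLower + Ω.blkDiag)⁻¹ * Ω.blkUpper))^k *ᵥ (Ω⁻¹ *ᵥ z)) = z ⬝ᵥ Ω⁻¹ *ᵥ z := by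
      rw [show y ⬝ᵥ ((-((Ω.blkLower + Ω.blkDiag)⁻¹ * Ω.blkUpper))^k *ᵥ (Ω⁻¹ *ᵥ z)) = (((-((Ω.blkLower + Ω.blkDiag)⁻¹ * Ω.blkUpper))^k)ᵀ *ᵥ y) ⬝ᵥ (Ω⁻¹ *ᵥ z) from
        dp_flip _ _ _, ← hz]
    clear_value z
    have h2 : (y ⬝ᵥ ((-((Ω.blkLower + Ω.blkDiag)⁻¹ * Ω.blkUpper))^k *ᵥ (Ω⁻¹ *ᵥ z)))^2
        ≤ (y ⬝ᵥ Ω⁻¹ *ᵥ y) * (((-((Ω.blkLower + Ω.blkDiag)⁻¹ * Ω.blkUpper))^k *ᵥ (Ω⁻¹ *ᵥ z)) ⬝ᵥ Ω *ᵥ ((-((Ω.blkLower + Ω.blkDiag)⁻¹ * Ω.blkUpper))^k *ᵥ (Ω⁻¹ *ᵥ z))) := by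
      have h := psd_cs hCpsd y (Ω *ᵥ ((-((Ω.blkLower + Ω.blkDiag)⁻¹ * Ω.blkUpper))^k *ᵥ (Ω⁻¹ *ᵥ z)))
      have c1 : Ω⁻¹ *ᵥ (Ω *ᵥ ((-((Ω.blkLower + Ω.blkDiag)⁻¹ * Ω.blkUpper))^k *ᵥ (Ω⁻¹ *ᵥ z))) = (-((Ω.blkLower + Ω.blkDiag)⁻¹ * Ω.blkUpper))^k *ᵥ (Ω⁻¹ *ᵥ z) := by
        rw [Matrix.mulVec_mulVec, hΩ'Ω, Matrix.one_mulVec]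
      rw [c1] at h
      have c2 : (Ω *ᵥ ((-((Ω.blkLower + Ω.blkDiag)⁻¹ * Ω.blkUpper))^k *ᵥ (Ω⁻¹ *ᵥ z))) ⬝ᵥ ((-((Ω.blkLower + Ω.blkDiag)⁻¹ * Ω.blkUpper))^k *ᵥ (Ω⁻¹ *ᵥ z))
          = ((-((Ω.blkLower + Ω.blkDiag)⁻¹ * Ω.blkUpper))^k *ᵥ (Ω⁻¹ *ᵥ z)) ⬝ᵥ Ω *ᵥ ((-((Ω.blkLower + Ω.blkDiag)⁻¹ * Ω.blkUpper))^k *ᵥ (Ω⁻¹ *ᵥ z)) := dotProduct_comm _ _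
      rw [c2] at h
      exact h
    have h3 : ((-((Ω.blkLower + Ω.blkDiag)⁻¹ * Ω.blkUpper))^k *ᵥ (Ω⁻¹ *ᵥ z)) ⬝ᵥ Ω *ᵥ ((-((Ω.blkLower + Ω.blkDiag)⁻¹ * Ω.blkUpper))^k *ᵥ (Ω⁻¹ *ᵥ z))
        ≤ β^k * (z ⬝ᵥ Ω⁻¹ *ᵥ z) := by
      have h := contrK k (Ω⁻¹ *ᵥ z)
      have c : (Ω⁻¹ *ᵥ z) ⬝ᵥ Ω *ᵥ (Ω⁻¹ *ᵥ z) = z ⬝ᵥ Ω⁻¹ *ᵥ z := by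
        rw [Matrix.mulVec_mulVec, hΩΩ, Matrix.one_mulVec, dotProduct_comm]
      rw [c] at h
      exact h
    rcases eq_or_lt_of_le hC0 with h0 | h0
    · rw [← h0]
      exact mul_nonneg (pow_nonneg hβ0 k) hy0
    · have hint := mul_le_mul_of_nonneg_left h3 hy0
      nlinarith [h1, h2, hint, h0]
  -- facts about the square root
  have hSqSq : hΩ.inv.posSemidef.sqrt * hΩ.inv.posSemidef.sqrt = Ω⁻¹ := hΩ.inv.posSemidef.sqrt_mul_self'
  have hSqT : hΩ.inv.posSemidef.sqrtᵀ = hΩ.inv.posSemidef.sqrt := herm_real hΩ.inv.posSemidef.sqrt_isHerm'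
  have hCdet : IsUnit (Ω⁻¹).det := (Matrix.isUnit_iff_isUnit_det _).mp hΩ.inv.isUnit
  have hSqdet : IsUnit (hΩ.inv.posSemidef.sqrt).det := by
    have hd : (hΩ.inv.posSemidef.sqrt).det * (hΩ.inv.posSemidef.sqrt).det = (Ω⁻¹).det := by rw [← Matrix.det_mul, hSqSq]
    apply isUnit_of_mul_isUnit_left (y := (hΩ.inv.posSemidef.sqrt).det)
    rw [hd]; exact hCdet
  have hS'S : hΩ.inv.posSemidef.sqrt⁻¹ * hΩ.inv.posSemidef.sqrt = 1 := Matrix.nonsing_inv_mul _ hSqdet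
  have hSS' : hΩ.inv.posSemidef.sqrt * hΩ.inv.posSemidef.sqrt⁻¹ = 1 := Matrix.mul_nonsing_inv _ hSqdet
  have hST : (hΩ.inv.posSemidef.sqrt⁻¹)ᵀ = hΩ.inv.posSemidef.sqrt⁻¹ := by rw [Matrix.transpose_nonsing_inv, hSqT]
  have hSS : hΩ.inv.posSemidef.sqrt⁻¹ * hΩ.inv.posSemidef.sqrt⁻¹ = Ω := by
    rw [← Matrix.mul_inv_rev, hSqSq, Matrix.nonsing_inv_nonsing_inv _ hΩdet]
  have hSCS : hΩ.inv.posSemidef.sqrt⁻¹ * Ω⁻¹ * hΩ.inv.posSemidef.sqrt⁻¹ = 1 := by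
    calc hΩ.inv.posSemidef.sqrt⁻¹ * Ω⁻¹ * hΩ.inv.posSemidef.sqrt⁻¹
        = hΩ.inv.posSemidef.sqrt⁻¹ * (hΩ.inv.posSemidef.sqrt * hΩ.inv.posSemidef.sqrt) * hΩ.inv.posSemidef.sqrt⁻¹ := by
          rw [hSqSq]
      _ = (hΩ.inv.posSemidef.sqrt⁻¹ * hΩ.inv.posSemidef.sqrt) * (hΩ.inv.posSemidef.sqrt * hΩ.inv.posSemidef.sqrt⁻¹) := by
          simp only [Matrix.mul_assoc]
      _ = 1 := by rw [hS'S, hSS', Matrix.one_mul]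
  -- norms via Sq⁻¹
  have hnorm : ∀ v : Fin m × Fin q → ℝ,
      (∑ i : Fin m × Fin q, (hΩ.inv.posSemidef.sqrt⁻¹ *ᵥ v) i ^ 2) = v ⬝ᵥ Ω *ᵥ v := by
    intro v
    have h1 : (∑ i : Fin m × Fin q, (hΩ.inv.posSemidef.sqrt⁻¹ *ᵥ v) i ^ 2)
        = (hΩ.inv.posSemidef.sqrt⁻¹ *ᵥ v) ⬝ᵥ (hΩ.inv.posSemidef.sqrt⁻¹ *ᵥ v) := by
      simp [dotProduct, pow_two]
    rw [h1, dp_flip, hST, Matrix.mulVec_mulVec, hSS, dotProduct_comm]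
  -- first term bound
  have hfirst : (∑ i : Fin m × Fin q, (hΩ.inv.posSemidef.sqrt⁻¹ *ᵥ ((-((Ω.blkLower + Ω.blkDiag)⁻¹ * Ω.blkUpper))^k *ᵥ (x₀ - mean))) i ^ 2)
      ≤ β^k * (∑ i : Fin m × Fin q, (hΩ.inv.posSemidef.sqrt⁻¹ *ᵥ (x₀ - mean)) i ^ 2) := by
    rw [hnorm, hnorm]
    exact contrK k (x₀ - mean)
  -- trace term bound
  have htp : ((-((Ω.blkLower + Ω.blkDiag)⁻¹ * Ω.blkUpper))ᵀ)^k = ((-((Ω.blkLower + Ω.blkDiag)⁻¹ * Ω.blkUpper))^k)ᵀ := by rw [Matrix.transpose_pow]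
  have htrace : (hΩ.inv.posSemidef.sqrt⁻¹ * (-((Ω.blkLower + Ω.blkDiag)⁻¹ * Ω.blkUpper))^k * Ω⁻¹ * ((-((Ω.blkLower + Ω.blkDiag)⁻¹ * Ω.blkUpper))ᵀ)^k * hΩ.inv.posSemidef.sqrt⁻¹).trace
      ≤ β^k * ((m : ℝ) * q) := by
    rw [htp]
    have hdiag : ∀ j : Fin m × Fin q,
        (hΩ.inv.posSemidef.sqrt⁻¹ * (-((Ω.blkLower + Ω.blkDiag)⁻¹ * Ω.blkUpper))^k * Ω⁻¹ * ((-((Ω.blkLower + Ω.blkDiag)⁻¹ * Ω.blkUpper))^k)ᵀ * hΩ.inv.posSemidef.sqrt⁻¹) j j ≤ β^k := by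
      intro j
      have hPj : (hΩ.inv.posSemidef.sqrt⁻¹ * (-((Ω.blkLower + Ω.blkDiag)⁻¹ * Ω.blkUpper))^k * Ω⁻¹ * ((-((Ω.blkLower + Ω.blkDiag)⁻¹ * Ω.blkUpper))^k)ᵀ * hΩ.inv.posSemidef.sqrt⁻¹) j j
          = (Pi.single j 1 : Fin m × Fin q → ℝ) ⬝ᵥ
              (hΩ.inv.posSemidef.sqrt⁻¹ * (-((Ω.blkLower + Ω.blkDiag)⁻¹ * Ω.blkUpper))^k * Ω⁻¹ * ((-((Ω.blkLower + Ω.blkDiag)⁻¹ * Ω.blkUpper))^k)ᵀ * hΩ.inv.posSemidef.sqrt⁻¹) *ᵥ (Pi.single j 1) := by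
        rw [Matrix.mulVec_single, single_dotProduct]
        simp
      have hassoc : hΩ.inv.posSemidef.sqrt⁻¹ * (-((Ω.blkLower + Ω.blkDiag)⁻¹ * Ω.blkUpper))^k * Ω⁻¹ * ((-((Ω.blkLower + Ω.blkDiag)⁻¹ * Ω.blkUpper))^k)ᵀ * hΩ.inv.posSemidef.sqrt⁻¹
          = hΩ.inv.posSemidef.sqrt⁻¹ * ((-((Ω.blkLower + Ω.blkDiag)⁻¹ * Ω.blkUpper))^k * Ω⁻¹ * ((-((Ω.blkLower + Ω.blkDiag)⁻¹ * Ω.blkUpper))^k)ᵀ) * hΩ.inv.posSemidef.sqrt⁻¹ := by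
        simp only [Matrix.mul_assoc]
      have hconj : (Pi.single j 1 : Fin m × Fin q → ℝ) ⬝ᵥ
              (hΩ.inv.posSemidef.sqrt⁻¹ * (-((Ω.blkLower + Ω.blkDiag)⁻¹ * Ω.blkUpper))^k * Ω⁻¹ * ((-((Ω.blkLower + Ω.blkDiag)⁻¹ * Ω.blkUpper))^k)ᵀ * hΩ.inv.posSemidef.sqrt⁻¹) *ᵥ (Pi.single j 1)
          = (hΩ.inv.posSemidef.sqrt⁻¹ *ᵥ Pi.single j 1) ⬝ᵥ ((-((Ω.blkLower + Ω.blkDiag)⁻¹ * Ω.blkUpper))^k * Ω⁻¹ * ((-((Ω.blkLower + Ω.blkDiag)⁻¹ * Ω.blkUpper))^k)ᵀ) *ᵥ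
              (hΩ.inv.posSemidef.sqrt⁻¹ *ᵥ Pi.single j 1) := by
        rw [hassoc, conj_qf _ _ hST]
      have hend : (hΩ.inv.posSemidef.sqrt⁻¹ *ᵥ Pi.single j 1) ⬝ᵥ Ω⁻¹ *ᵥ (hΩ.inv.posSemidef.sqrt⁻¹ *ᵥ Pi.single j 1)
          = (1:ℝ) := by
        rw [← conj_qf _ _ hST, hSCS, Matrix.one_mulVec]
        simp [dotProduct, Pi.single_apply]
      have hb := contrC k (hΩ.inv.posSemidef.sqrt⁻¹ *ᵥ Pi.single j 1)
      rw [hend, mul_one] at hb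
      rw [hPj, hconj]
      exact hb
    calc (hΩ.inv.posSemidef.sqrt⁻¹ * (-((Ω.blkLower + Ω.blkDiag)⁻¹ * Ω.blkUpper))^k * Ω⁻¹ * ((-((Ω.blkLower + Ω.blkDiag)⁻¹ * Ω.blkUpper))^k)ᵀ * hΩ.inv.posSemidef.sqrt⁻¹).trace
        = ∑ j : Fin m × Fin q, (hΩ.inv.posSemidef.sqrt⁻¹ * (-((Ω.blkLower + Ω.blkDiag)⁻¹ * Ω.blkUpper))^k * Ω⁻¹ * ((-((Ω.blkLower + Ω.blkDiag)⁻¹ * Ω.blkUpper))^k)ᵀ * hΩ.inv.posSemidef.sqrt⁻¹) j j := by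
          simp [Matrix.trace, Matrix.diag]
      _ ≤ ∑ _j : Fin m × Fin q, β^k := Finset.sum_le_sum fun j _ => hdiag j
      _ = β^k * ((m : ℝ) * q) := by
          rw [Finset.sum_const, Finset.card_univ, Fintype.card_prod,
            Fintype.card_fin, Fintype.card_fin, nsmul_eq_mul]
          push_cast
          ring
  -- assemble
  set s := ∑ i : Fin m × Fin q, (hΩ.inv.posSemidef.sqrt⁻¹ *ᵥ (x₀ - mean)) i ^ 2 with hs
  have hs0 : 0 ≤ s := by
    rw [hs]
    exact Finset.sum_nonneg fun i _ => sq_nonneg _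
  have hmq : s + (m : ℝ) * q ≤ (m : ℝ) * q * (1 + s) := by
    rcases Nat.eq_zero_or_pos (m * q) with h0 | h0
    · have hempty : IsEmpty (Fin m × Fin q) := by
        rcases Nat.mul_eq_zero.mp h0 with h | h
        · subst h; exact ⟨fun p => absurd p.1.2 (by omega)⟩
        · subst h; exact ⟨fun p => absurd p.2.2 (by omega)⟩
      have hsz : s = 0 := by
        rw [hs, Finset.univ_eq_empty, Finset.sum_empty]
      have hmz : (m : ℝ) * q = 0 := by
        rcases Nat.mul_eq_zero.mp h0 with h | h <;> subst h <;> simp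
      rw [hsz, hmz]; linarith
    · have h1 : (1 : ℝ) ≤ (m : ℝ) * q := by
        have h2 : (1 : ℕ) ≤ m * q := h0
        calc (1:ℝ) ≤ ((m * q : ℕ) : ℝ) := by exact_mod_cast h2
          _ = (m : ℝ) * q := by push_cast; ring
      nlinarith [hs0, h1]
  calc (∑ i : Fin m × Fin q, (hΩ.inv.posSemidef.sqrt⁻¹ *ᵥ ((-((Ω.blkLower + Ω.blkDiag)⁻¹ * Ω.blkUpper))^k *ᵥ (x₀ - mean))) i ^ 2)
        + (hΩ.inv.posSemidef.sqrt⁻¹ * (-((Ω.blkLower + Ω.blkDiag)⁻¹ * Ω.blkUpper))^k * Ω⁻¹ * ((-((Ω.blkLower + Ω.blkDiag)⁻¹ * Ω.blkUpper))ᵀ)^k * hΩ.inv.posSemidef.sqrt⁻¹).trace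
      ≤ β^k * s + β^k * ((m : ℝ) * q) := add_le_add hfirst htrace
    _ = β^k * (s + (m : ℝ) * q) := by ring
    _ ≤ β^k * ((m : ℝ) * q * (1 + s)) :=
        mul_le_mul_of_nonneg_left hmq (pow_nonneg hβ0 k)
    _ = β^k * ((m : ℝ) * q) * (1 + s) := by ring
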